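/- Let n ≥ 1, let 𝔤 be a linear subspace of the real n×n matrices, and let X ∈ 𝔤 be such that Y·X − X·Y ∈ 𝔤 for every Y ∈ 𝔤; let L : 𝔤 → 𝔤 be the induced linear map (so that, as a matrix, L(Y) = Y·X − X·Y). Let 𝒳 be a real Banach space, p : 𝔤 → 𝒳 a linear map, and S : [0,∞) → ℒ(𝒳) a family of bounded linear operators with S(0) = Id such that, for every Y ∈ 𝔤 and every t ≥ 0, the map s ↦ S(s)(p(Y)) has (right-)derivative S(t)(p(L Y)) at t within [0,∞). Then for every t ≥ 0 and every Y ∈ 𝔤: (a) S(t)(p(Y)) = p(exp(t·L)(Y)), where exp(t·L) is the operator exponential of t·L on the finite-dimensional space 𝔤; and (b) as matrices, exp(t·L)(Y) = exp(−t·X) · Y · exp(t·X), where exp on matrices is the matrix exponential. -/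

import Mathlib

attribute [local instance] Matrix.linftyOpNormedAddCommGroup Matrix.linftyOpNormedSpace
  Matrix.linftyOpNormedRing Matrix.linftyOpNormedAlgebra

noncomputable local instance (n : ℕ) (g : Submodule ℝ (Matrix (Fin n) (Fin n) ℝ)) :
    NormedRing (g →L[ℝ] g) :=
  ContinuousLinearMap.toNormedRing

local instance (n : ℕ) (g : Submodule ℝ (Matrix (Fin n) (Fin n) ℝ)) :
    IsTopologicalRing (g →L[ℝ] g) :=
  NonUnitalSeminormedRing.toIsTopologicalRing

open NormedSpace

theorem aux_comm {E : Type*} [NormedAddCommGroup E] [NormedSpace ℝ E] [CompleteSpace E]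
    (L : E →L[ℝ] E)
    (r : ℝ) (Y : E) : L (exp (r • L) Y) = exp (r • L) (L Y) := by
  have h0 : Commute (r • L) L := by
    show (r • L) * L = L * (r • L)
    refine ContinuousLinearMap.ext fun v => ?_
    show ((r • L) (L v)) = L ((r • L) v)
    simp
  have h : Commute (exp (r • L)) L := h0.exp_left
  have heq : exp (r • L) * L = L * exp (r • L) := h.eq
  calc L (exp (r • L) Y) = (L * exp (r • L)) Y := rfl
    _ = (exp (r • L) * L) Y := by rw [heq]
    _ = exp (r • L) (L Y) := rfl

set_option maxHeartbeats 1000000 in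
set_option synthInstance.maxHeartbeats 400000 in
theorem aux_partA {E : Type*} [NormedAddCommGroup E] [NormedSpace ℝ E] [FiniteDimensional ℝ E]
    (L : E →L[ℝ] E)
    {𝒳 : Type*} [NormedAddCommGroup 𝒳] [NormedSpace ℝ 𝒳] [CompleteSpace 𝒳]
    (p : E →ₗ[ℝ] 𝒳)
    (S : ℝ → 𝒳 →L[ℝ] 𝒳) (hS0 : S 0 = ContinuousLinearMap.id ℝ 𝒳)
    (hderiv : ∀ Y : E, ∀ t : ℝ, 0 ≤ t →
      HasDerivWithinAt (fun s => S s (p Y)) (S t (p (L Y))) (Set.Ici 0) t)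
    (t₀ : ℝ) (ht₀ : 0 ≤ t₀) (Y : E) :
    S t₀ (p Y) = p (exp (t₀ • L) Y) := by
  classical
  haveI : CompleteSpace E := FiniteDimensional.complete ℝ E
  set B := Module.finBasis ℝ E with hB
  set Z : ℝ → E := fun s => exp ((t₀ - s) • L) Y with hZdef
  set Zd : ℝ → E := fun s => -(exp ((t₀ - s) • L) (L Y)) with hZddef
  -- derivative of Z
  have hZd : ∀ s : ℝ, HasDerivAt Z (Zd s) s := by
    intro s
    have h1 : HasDerivAt (fun u : ℝ => exp (u • L)) (exp ((t₀ - s) • L) * L) (t₀ - s) :=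
      hasDerivAt_exp_smul_const L (t₀ - s)
    have h2 : HasDerivAt (fun u : ℝ => t₀ - u) (-1 : ℝ) s := by
      simpa using (hasDerivAt_id s).const_sub t₀
    have h3 : HasDerivAt (fun u : ℝ => exp ((t₀ - u) • L))
        ((-1 : ℝ) • (exp ((t₀ - s) • L) * L)) s := h1.scomp s h2
    have h4 := h3.clm_apply (hasDerivAt_const s Y)
    simp only [map_zero, add_zero, neg_smul, one_smul, ContinuousLinearMap.neg_apply,
      ContinuousLinearMap.smul_apply, ContinuousLinearMap.mul_apply] at h4
    exact h4
  -- coordinate functions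
  have hcoord : ∀ (i : Fin (Module.finrank ℝ E)) (s : ℝ),
      HasDerivAt (fun s => B.repr (Z s) i) (B.repr (Zd s) i) s := by
    intro i s
    have ℓ : E →L[ℝ] ℝ := LinearMap.toContinuousLinearMap (B.coord i)
    exact (LinearMap.toContinuousLinearMap (B.coord i)).hasFDerivAt.comp_hasDerivAt s (hZd s)
  -- sum representation
  have hsum : ∀ (q : E →ₗ[ℝ] 𝒳) (W : E), ∑ i, B.repr W i • q (B i) = q W := by
    intro q W
    conv_rhs => rw [← B.sum_repr W]
    rw [map_sum]
    simp [map_smul]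
  set u : ℝ → 𝒳 := fun s => ∑ i, B.repr (Z s) i • S s (p (B i)) with hudef
  have hukey : ∀ s : ℝ, u s = S s (p (Z s)) := by
    intro s
    have := hsum (((S s : 𝒳 →ₗ[ℝ] 𝒳)).comp p) (Z s)
    simpa [hudef] using this
  -- derivative of u is zero
  have hu : ∀ s : ℝ, 0 ≤ s → HasDerivWithinAt u 0 (Set.Ici 0) s := by
    intro s hs
    have hterm : ∀ i : Fin (Module.finrank ℝ E),
        HasDerivWithinAt (fun s => B.repr (Z s) i • S s (p (B i)))
          (B.repr (Z s) i • S s (p (L (B i))) + B.repr (Zd s) i • S s (p (B i)))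
          (Set.Ici 0) s :=
      fun i => ((hcoord i s).hasDerivWithinAt).smul (hderiv (B i) s hs)
    have hsumderiv : HasDerivWithinAt u
        (∑ i, (B.repr (Z s) i • S s (p (L (B i))) + B.repr (Zd s) i • S s (p (B i))))
        (Set.Ici 0) s := HasDerivWithinAt.fun_sum (fun i _ => hterm i)
    have hzero : (∑ i, (B.repr (Z s) i • S s (p (L (B i))) + B.repr (Zd s) i • S s (p (B i)))) = 0 := by
      rw [Finset.sum_add_distrib]
      have e1 := hsum ((S s : 𝒳 →ₗ[ℝ] 𝒳).comp (p.comp (L : E →ₗ[ℝ] E))) (Z s)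
      have e2 := hsum ((S s : 𝒳 →ₗ[ℝ] 𝒳).comp p) (Zd s)
      simp only [LinearMap.comp_apply, LinearMap.coe_coe, ContinuousLinearMap.coe_coe] at e1 e2
      rw [e1, e2]
      have : L (Z s) = exp ((t₀ - s) • L) (L Y) := aux_comm L (t₀ - s) Y
      rw [this]
      show S s (p (exp ((t₀ - s) • L) (L Y))) +
        S s (p (-(exp ((t₀ - s) • L) (L Y)))) = 0
      rw [map_neg, map_neg, add_neg_cancel]
    rw [hzero] at hsumderiv
    exact hsumderiv
  -- constancy
  have hconst := constant_of_has_deriv_right_zero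
    (f := u) (a := 0) (b := t₀)
    (fun x hx => ((hu x hx.1).continuousWithinAt).mono Set.Icc_subset_Ici_self)
    (fun x hx => (hu x hx.1).mono (Set.Ici_subset_Ici.2 hx.1))
  have := hconst t₀ (Set.right_mem_Icc.2 ht₀)
  -- evaluate
  have hZt : Z t₀ = Y := by
    show exp ((t₀ - t₀) • L) Y = Y
    rw [sub_self, zero_smul, exp_zero, ContinuousLinearMap.one_apply]
  have hZ0 : Z 0 = exp (t₀ • L) Y := by
    show exp ((t₀ - 0) • L) Y = exp (t₀ • L) Y
    rw [sub_zero]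
  rw [hukey t₀, hukey 0, hZt, hZ0, hS0] at this
  simpa only [ContinuousLinearMap.id_apply] using this

theorem aux_deriv {E : Type*} [NormedAddCommGroup E] [NormedSpace ℝ E] [CompleteSpace E]
    (L : E →L[ℝ] E) (s : ℝ) (Y : E) :
    HasDerivAt (fun u : ℝ => exp (u • L) Y) (L (exp (s • L) Y)) s := by
  have h1 : HasDerivAt (fun u : ℝ => exp (u • L)) (exp (s • L) * L) s :=
    hasDerivAt_exp_smul_const L s
  have h2 := h1.clm_apply (hasDerivAt_const s Y)
  simp only [map_zero, add_zero, ContinuousLinearMap.mul_apply] at h2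
  rwa [← aux_comm L s Y] at h2

theorem aux_zero {E : Type*} [NormedAddCommGroup E] [NormedSpace ℝ E] [CompleteSpace E]
    (L : E →L[ℝ] E) (Y : E) : exp ((0:ℝ) • L) Y = Y := by
  rw [zero_smul, exp_zero, ContinuousLinearMap.one_apply]

set_option maxHeartbeats 1000000 in
set_option synthInstance.maxHeartbeats 400000 in
theorem aux_partB (n : ℕ) (g : Submodule ℝ (Matrix (Fin n) (Fin n) ℝ))
    (X : g) (L : g →L[ℝ] g)
    (hL : ∀ Y : g,
      (L Y : Matrix (Fin n) (Fin n) ℝ) =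
        (Y : Matrix (Fin n) (Fin n) ℝ) * X - (X : Matrix (Fin n) (Fin n) ℝ) * Y)
    (t : ℝ) (Y : g) :
    ((exp (t • L) Y : g) : Matrix (Fin n) (Fin n) ℝ) =
      exp ((-t) • (X : Matrix (Fin n) (Fin n) ℝ)) *
        (Y : Matrix (Fin n) (Fin n) ℝ) *
        exp (t • (X : Matrix (Fin n) (Fin n) ℝ)) := by
  set Xm : Matrix (Fin n) (Fin n) ℝ := (X : Matrix (Fin n) (Fin n) ℝ) with hXm
  set a : ℝ → Matrix (Fin n) (Fin n) ℝ := fun s => exp (s • Xm) with hadef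
  set b : ℝ → Matrix (Fin n) (Fin n) ℝ := fun s => ((exp (s • L) Y : g) : Matrix (Fin n) (Fin n) ℝ) with hbdef
  set c : ℝ → Matrix (Fin n) (Fin n) ℝ := fun s => exp (s • (-Xm)) with hcdef
  have ha : ∀ s, HasDerivAt a (Xm * a s) s := fun s => hasDerivAt_exp_smul_const' Xm s
  have hc : ∀ s, HasDerivAt c (c s * (-Xm)) s := fun s => hasDerivAt_exp_smul_const (-Xm) s
  have hb : ∀ s, HasDerivAt b (b s * Xm - Xm * b s) s := by
    intro s
    have h3 : HasDerivAt (fun u : ℝ => exp (u • L) Y) (L (exp (s • L) Y)) s :=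
      aux_deriv L s Y
    have h4 := (g.subtypeL.hasFDerivAt).comp_hasDerivAt s h3
    have h5 : (g.subtypeL (L (exp (s • L) Y)) : Matrix (Fin n) (Fin n) ℝ) =
        b s * Xm - Xm * b s := by
      show ((L (exp (s • L) Y) : g) : Matrix (Fin n) (Fin n) ℝ) = _
      rw [hL]
    rw [← h5]
    exact h4
  have haX : ∀ s, a s * Xm = Xm * a s := by
    intro s
    have h0 : Commute (s • Xm) Xm := by
      show (s • Xm) * Xm = Xm * (s • Xm)
      rw [smul_mul_assoc, mul_smul_comm]
    exact ((h0.exp_left).eq)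
  have hcX : ∀ s, c s * Xm = Xm * c s := by
    intro s
    have h0 : Commute (s • (-Xm)) Xm := by
      show (s • (-Xm)) * Xm = Xm * (s • (-Xm))
      rw [smul_mul_assoc, mul_smul_comm, neg_mul, mul_neg]
    exact ((h0.exp_left).eq)
  set k : ℝ → Matrix (Fin n) (Fin n) ℝ := fun s => a s * b s * c s with hkdef
  have hk : ∀ s, HasDerivAt k 0 s := by
    intro s
    have h := ((ha s).mul (hb s)).mul (hc s)
    have hzero : (Xm * a s * b s + a s * (b s * Xm - Xm * b s)) * c s +
        a s * b s * (c s * -Xm) = 0 := by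
      rw [mul_neg, hcX s, mul_sub, ← mul_assoc (a s) Xm (b s), haX s]
      noncomm_ring
    rw [show (a * b) s = a s * b s from rfl, hzero] at h
    exact h
  have hconst : k t = k 0 :=
    is_const_of_deriv_eq_zero (fun s => (hk s).differentiableAt)
      (fun s => (hk s).deriv) t 0
  have hk0 : k 0 = (Y : Matrix (Fin n) (Fin n) ℝ) := by
    show a 0 * b 0 * c 0 = _
    have ha0 : a 0 = 1 := by show exp ((0:ℝ) • Xm) = 1; rw [zero_smul, exp_zero]
    have hc0 : c 0 = 1 := by show exp ((0:ℝ) • (-Xm)) = 1; rw [zero_smul, exp_zero]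
    have hb0 : b 0 = (Y : Matrix (Fin n) (Fin n) ℝ) := by
      show ((exp ((0:ℝ) • L) Y : g) : Matrix (Fin n) (Fin n) ℝ) = _
      exact congrArg Subtype.val (aux_zero L Y)
    rw [ha0, hb0, hc0, one_mul, mul_one]
  have hca : c t * a t = 1 := by
    show exp (t • (-Xm)) * exp (t • Xm) = 1
    have hcomm : Commute (t • (-Xm)) (t • Xm) := by
      show (t • (-Xm)) * (t • Xm) = (t • Xm) * (t • (-Xm))
      rw [smul_mul_assoc, mul_smul_comm, smul_mul_assoc, mul_smul_comm, neg_mul, mul_neg]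
    erw [← exp_add_of_commute hcomm, smul_neg, neg_add_cancel, exp_zero]
  have key : b t = c t * (Y : Matrix (Fin n) (Fin n) ℝ) * a t := by
    calc b t = 1 * b t * 1 := by rw [one_mul, mul_one]
      _ = (c t * a t) * b t * (c t * a t) := by rw [hca]
      _ = c t * (a t * b t * c t) * a t := by noncomm_ring
      _ = c t * k t * a t := rfl
      _ = c t * (Y : Matrix (Fin n) (Fin n) ℝ) * a t := by rw [hconst, hk0]
  show b t = _
  rw [key]
  rw [neg_smul]
  rw [← smul_neg]

/-- **Dynamics on the center space** (Proposition 3.7).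
Let `𝔤` be a subspace of the real `n×n` matrices, `X ∈ 𝔤` with `[Y,X] = Y·X − X·Y ∈ 𝔤` for all
`Y ∈ 𝔤`, and `L : 𝔤 → 𝔤` the induced linear map. If `p : 𝔤 → 𝒳` is linear and
`S : [0,∞) → ℒ(𝒳)`, `S(0) = Id`, satisfies `(d/dt) S(t)(p Y) = S(t)(p (L Y))` (right derivative
within `[0,∞)`), then `S(t)(p Y) = p (exp(tL) Y)` and, as matrices,
`exp(tL) Y = exp(−tX) · Y · exp(tX)`. -/
theorem center_space_dynamics
    (n : ℕ) (hn : 1 ≤ n) (g : Submodule ℝ (Matrix (Fin n) (Fin n) ℝ))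
    (X : g)
    (hbracket : ∀ Y : g, (Y : Matrix (Fin n) (Fin n) ℝ) * X - (X : Matrix (Fin n) (Fin n) ℝ) * Y ∈ g)
    (L : g →L[ℝ] g)
    (hL : ∀ Y : g,
      (L Y : Matrix (Fin n) (Fin n) ℝ) =
        (Y : Matrix (Fin n) (Fin n) ℝ) * X - (X : Matrix (Fin n) (Fin n) ℝ) * Y)
    {𝒳 : Type*} [NormedAddCommGroup 𝒳] [NormedSpace ℝ 𝒳] [CompleteSpace 𝒳]
    (p : g →ₗ[ℝ] 𝒳)
    (S : ℝ → 𝒳 →L[ℝ] 𝒳) (hS0 : S 0 = ContinuousLinearMap.id ℝ 𝒳)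
    (hderiv : ∀ Y : g, ∀ t : ℝ, 0 ≤ t →
      HasDerivWithinAt (fun s => S s (p Y)) (S t (p (L Y))) (Set.Ici 0) t) :
    ∀ t : ℝ, 0 ≤ t → ∀ Y : g,
      S t (p Y) = p (NormedSpace.exp (t • L) Y) ∧
      ((NormedSpace.exp (t • L) Y : g) : Matrix (Fin n) (Fin n) ℝ) =
        NormedSpace.exp ((-t) • (X : Matrix (Fin n) (Fin n) ℝ)) *
          (Y : Matrix (Fin n) (Fin n) ℝ) *
          NormedSpace.exp (t • (X : Matrix (Fin n) (Fin n) ℝ)) := by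
  intro t ht Y
  exact ⟨aux_partA L p S hS0 hderiv t ht Y, aux_partB n g X L hL t Y⟩
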